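/- Let |ψ⟩ be a unit vector in ℂ^D ⊗ ℂ^D, and let A_1,…,A_{m_A}, B_1,…,B_{m_B} be Hermitian D×D matrices with A_i² = 𝟙 and B_j² = 𝟙. Then there exist real unit vectors a_1,…,a_{m_A} and b_1,…,b_{m_B} in ℝ^{2D²} such that ⟨ψ| A_i ⊗ B_j |ψ⟩ = ⟨a_i, b_j⟩ for all i, j. -/

import Mathlib

open Matrix
open Kronecker
open scoped InnerProductSpace

section aux

variable {D : ℕ}

private lemma conjT_kron (M N : Matrix (Fin D) (Fin D) ℂ) :
    (M ⊗ₖ N)ᴴ = Mᴴ ⊗ₖ Nᴴ := by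
  ext i j
  simp [Matrix.conjTranspose_apply, Matrix.kroneckerMap_apply, _root_.map_mul]

private lemma toEL_one (x : EuclideanSpace ℂ (Fin D × Fin D)) :
    Matrix.toEuclideanLin (1 : Matrix (Fin D × Fin D) (Fin D × Fin D) ℂ) x = x := by
  simp [Matrix.toEuclideanLin_apply, Matrix.one_mulVec]

private lemma toEL_mul (M N : Matrix (Fin D × Fin D) (Fin D × Fin D) ℂ)
    (x : EuclideanSpace ℂ (Fin D × Fin D)) :
    Matrix.toEuclideanLin (M * N) x =
      Matrix.toEuclideanLin M (Matrix.toEuclideanLin N x) := by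
  simp [Matrix.toEuclideanLin_apply, Matrix.mulVec_mulVec]

private lemma inner_toEL (M N : Matrix (Fin D × Fin D) (Fin D × Fin D) ℂ)
    (ψ : EuclideanSpace ℂ (Fin D × Fin D)) :
    ⟪Matrix.toEuclideanLin M ψ, Matrix.toEuclideanLin N ψ⟫_ℂ =
      ⟪ψ, Matrix.toEuclideanLin (Mᴴ * N) ψ⟫_ℂ := by
  rw [toEL_mul, Matrix.toEuclideanLin_conjTranspose_eq_adjoint,
    LinearMap.adjoint_inner_right]

/-- realification map -/
noncomputable def realify (e : (Fin D × Fin D) × Fin 2 ≃ Fin (2 * D ^ 2))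
    (v : EuclideanSpace ℂ (Fin D × Fin D)) : EuclideanSpace ℝ (Fin (2 * D ^ 2)) :=
  WithLp.toLp 2 (fun k => if (e.symm k).2 = 0 then (v (e.symm k).1).re else (v (e.symm k).1).im)

lemma realify_inner (e : (Fin D × Fin D) × Fin 2 ≃ Fin (2 * D ^ 2))
    (u v : EuclideanSpace ℂ (Fin D × Fin D)) :
    ⟪realify e u, realify e v⟫_ℝ = (⟪u, v⟫_ℂ).re := by
  rw [PiLp.inner_apply, PiLp.inner_apply]
  simp only [RCLike.inner_apply]
  rw [← Equiv.sum_comp e (fun k => realify e v k * (starRingEnd ℝ) (realify e u k))]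
  rw [Fintype.sum_prod_type]
  simp only [realify, PiLp.toLp_apply, Equiv.symm_apply_apply, Complex.re_sum]
  refine Finset.sum_congr rfl fun p _ => ?_
  rw [Fin.sum_univ_two]
  have h10 : ((1 : Fin 2) = 0) = False := by simp
  simp [h10, Complex.mul_re, Complex.star_def]

lemma realify_norm (e : (Fin D × Fin D) × Fin 2 ≃ Fin (2 * D ^ 2))
    (v : EuclideanSpace ℂ (Fin D × Fin D)) : ‖realify e v‖ = ‖v‖ := by
  have h1 : ‖realify e v‖ ^ 2 = ‖v‖ ^ 2 := by
    rw [← real_inner_self_eq_norm_sq, realify_inner]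
    exact inner_self_eq_norm_sq (𝕜 := ℂ) v
  rw [← Real.sqrt_sq (norm_nonneg (realify e v)), h1, Real.sqrt_sq (norm_nonneg v)]

end aux

theorem stmt17 (D mA mB : ℕ)
    (ψ : EuclideanSpace ℂ (Fin D × Fin D)) (hψ : ‖ψ‖ = 1)
    (A : Fin mA → Matrix (Fin D) (Fin D) ℂ) (B : Fin mB → Matrix (Fin D) (Fin D) ℂ)
    (hAHerm : ∀ i, (A i).IsHermitian) (hBHerm : ∀ j, (B j).IsHermitian)
    (hA : ∀ i, A i ^ 2 = 1) (hB : ∀ j, B j ^ 2 = 1) :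
    ∃ a : Fin mA → EuclideanSpace ℝ (Fin (2 * D ^ 2)),
    ∃ b : Fin mB → EuclideanSpace ℝ (Fin (2 * D ^ 2)),
      (∀ i, ‖a i‖ = 1) ∧ (∀ j, ‖b j‖ = 1) ∧
      ∀ i j, ⟪ψ, Matrix.toEuclideanLin (A i ⊗ₖ B j) ψ⟫_ℂ = ((⟪a i, b j⟫_ℝ : ℝ) : ℂ) := by
  have card : Fintype.card ((Fin D × Fin D) × Fin 2) = 2 * D ^ 2 := by
    simp [pow_two]; ring
  let e : (Fin D × Fin D) × Fin 2 ≃ Fin (2 * D ^ 2) := Fintype.equivFinOfCardEq card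
  set T := (Matrix.toEuclideanLin :
    Matrix (Fin D × Fin D) (Fin D × Fin D) ℂ ≃ₗ[ℂ] _) with hT
  have hMherm : ∀ i, ((A i ⊗ₖ (1 : Matrix (Fin D) (Fin D) ℂ)))ᴴ
      = A i ⊗ₖ 1 := by
    intro i; rw [conjT_kron, (hAHerm i).eq, Matrix.conjTranspose_one]
  have hNherm : ∀ j, (((1 : Matrix (Fin D) (Fin D) ℂ) ⊗ₖ B j))ᴴ
      = 1 ⊗ₖ B j := by
    intro j; rw [conjT_kron, (hBHerm j).eq, Matrix.conjTranspose_one]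
  have hMN : ∀ i j, (A i ⊗ₖ (1 : Matrix (Fin D) (Fin D) ℂ)) *
      ((1 : Matrix (Fin D) (Fin D) ℂ) ⊗ₖ B j) = A i ⊗ₖ B j := by
    intro i j; rw [← Matrix.mul_kronecker_mul, mul_one, one_mul]
  -- the complex vectors
  set v : Fin mA → EuclideanSpace ℂ (Fin D × Fin D) :=
    fun i => T (A i ⊗ₖ 1) ψ with hv
  set w : Fin mB → EuclideanSpace ℂ (Fin D × Fin D) :=
    fun j => T (1 ⊗ₖ B j) ψ with hw
  have hψ2 : ⟪ψ, ψ⟫_ℂ = 1 := by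
    rw [inner_self_eq_norm_sq_to_K, hψ]; norm_num
  have hvnorm : ∀ i, ‖v i‖ = 1 := by
    intro i
    have : ⟪v i, v i⟫_ℂ = 1 := by
      rw [hv]
      rw [inner_toEL, hMherm i, ← Matrix.mul_kronecker_mul, one_mul, ← pow_two, hA i,
        Matrix.one_kronecker_one]
      rw [toEL_one]; exact hψ2
    have h2 : ‖v i‖ ^ 2 = 1 := by
      have h3 := congrArg Complex.re this
      rw [show (⟪v i, v i⟫_ℂ).re = ‖v i‖ ^ 2 from inner_self_eq_norm_sq (𝕜 := ℂ) (v i)] at h3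
      simpa using h3
    nlinarith [norm_nonneg (v i)]
  have hwnorm : ∀ j, ‖w j‖ = 1 := by
    intro j
    have : ⟪w j, w j⟫_ℂ = 1 := by
      rw [hw]
      rw [inner_toEL, hNherm j, ← Matrix.mul_kronecker_mul, one_mul, ← pow_two, hB j,
        Matrix.one_kronecker_one]
      rw [toEL_one]; exact hψ2
    have h2 : ‖w j‖ ^ 2 = 1 := by
      have h3 := congrArg Complex.re this
      rw [show (⟪w j, w j⟫_ℂ).re = ‖w j‖ ^ 2 from inner_self_eq_norm_sq (𝕜 := ℂ) (w j)] at h3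
      simpa using h3
    nlinarith [norm_nonneg (w j)]
  have hinner : ∀ i j, ⟪ψ, Matrix.toEuclideanLin (A i ⊗ₖ B j) ψ⟫_ℂ = ⟪v i, w j⟫_ℂ := by
    intro i j
    rw [hv, hw, inner_toEL, hMherm i, hMN i j]
  have hreal : ∀ i j, (⟪v i, w j⟫_ℂ).im = 0 := by
    intro i j
    have h1 : ⟪v i, w j⟫_ℂ = ⟪ψ, T (A i ⊗ₖ B j) ψ⟫_ℂ := (hinner i j).symm
    have h2 : ⟪w j, v i⟫_ℂ = ⟪ψ, T (A i ⊗ₖ B j) ψ⟫_ℂ := by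
      rw [hw, hv, inner_toEL, hNherm j, ← Matrix.mul_kronecker_mul, one_mul, mul_one]
    have hc : (starRingEnd ℂ) ⟪v i, w j⟫_ℂ = ⟪v i, w j⟫_ℂ := by
      rw [inner_conj_symm, h2, ← h1]
    exact Complex.conj_eq_iff_im.mp hc
  refine ⟨fun i => realify e (v i), fun j => realify e (w j), ?_, ?_, ?_⟩
  · intro i; rw [realify_norm]; exact hvnorm i
  · intro j; rw [realify_norm]; exact hwnorm j
  · intro i j
    rw [hinner i j, realify_inner]
    exact (Complex.re_add_im _).symm.trans (by rw [hreal i j]; simp)
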